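/- Suppose α ∈ ℕ^{Q_0}, v is a loopfree vertex with (α, e_v) = 1, and α − e_v ∈ ~Σ_{q,θ} (the set of flat roots for the reflected data). If α = β^{(1)} + ⋯ + β^{(k)} is any decomposition with β^{(j)} ∈ R^+_{q,θ}, then p(α) ≥ Σ_j p(β^{(j)}). In other words, flatness is preserved under (−1)-reflections: if s_v(α) = α − e_v is flat then α is flat. -/

import Mathlib

open Finset

variable {V A : Type*} [Fintype V] [DecidableEq V] [Fintype A]

/-- Euler (Ringel) form of a quiver with arrow set `A`, tail `t`, head `h`. -/
def euler (t h : A → V) (α β : V → ℤ) : ℤ :=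
  (∑ i, α i * β i) - ∑ a, α (t a) * β (h a)

/-- Symmetrised Cartan (Tits) form. -/
def cartan (t h : A → V) (α β : V → ℤ) : ℤ :=
  euler t h α β + euler t h β α

/-- Coordinate vector at a vertex. -/
def evec (i : V) : V → ℤ := fun j => if j = i then 1 else 0

/-- A vertex is loopfree if no arrow is a loop at it. -/
def loopfree (t h : A → V) (i : V) : Prop := ∀ a : A, ¬ (t a = i ∧ h a = i)

/-- Simple reflection at a (loopfree) vertex: `s_i(α) = α - (α, e_i) e_i`. -/
def srefl (t h : A → V) (i : V) (α : V → ℤ) : V → ℤ :=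
  fun j => α j - cartan t h α (evec i) * evec i j

/-- Multiplicative pairing `q^α = ∏ i, q i ^ α i`. -/
def qpow (q : V → ℂˣ) (α : V → ℤ) : ℂˣ := ∏ i, q i ^ α i

/-- `p(α) = 1 - ⟨α,α⟩`. -/
def pfun (t h : A → V) (α : V → ℤ) : ℤ := 1 - euler t h α α

/-- Adjacency of two vertices in the underlying graph. -/
def adj (t h : A → V) (i j : V) : Prop :=
  ∃ a : A, (t a = i ∧ h a = j) ∨ (t a = j ∧ h a = i)

/-- The support of `α` is connected. -/
def connSupp (t h : A → V) (α : V → ℤ) : Prop :=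
  ∀ i j, α i ≠ 0 → α j ≠ 0 →
    Relation.ReflTransGen (fun x y => adj t h x y ∧ α x ≠ 0 ∧ α y ≠ 0) i j

/-- The fundamental region: nonzero, nonnegative, connected support,
`(α, e_i) ≤ 0` for all vertices `i`. -/
def fundRegion (t h : A → V) (α : V → ℤ) : Prop :=
  α ≠ 0 ∧ (∀ i, 0 ≤ α i) ∧ connSupp t h α ∧ ∀ i, cartan t h α (evec i) ≤ 0

/-- Roots of the quiver: obtained from coordinate vectors at loopfree vertices
(real roots) or from `±` elements of the fundamental region (imaginary roots)
by sequences of simple reflections at loopfree vertices. -/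
inductive IsRoot (t h : A → V) : (V → ℤ) → Prop
  | real (i : V) : loopfree t h i → IsRoot t h (evec i)
  | fund (α : V → ℤ) : fundRegion t h α → IsRoot t h α
  | fundNeg (α : V → ℤ) : fundRegion t h α → IsRoot t h (-α)
  | reflect (α : V → ℤ) (i : V) : loopfree t h i → IsRoot t h α →
      IsRoot t h (srefl t h i α)

/-- `N_{q,θ}`: nonnegative vectors with `q^α = 1` and `θ·α = 0`. -/
def Nqt (q : V → ℂˣ) (θ : V → ℤ) (α : V → ℤ) : Prop :=
  (∀ i, 0 ≤ α i) ∧ qpow q α = 1 ∧ (∑ i, θ i * α i) = 0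

/-- Positive roots in `N_{q,θ}`. -/
def Rplus (t h : A → V) (q : V → ℂˣ) (θ : V → ℤ) (α : V → ℤ) : Prop :=
  IsRoot t h α ∧ Nqt q θ α

/-- The set `Σ_{q,θ}`: positive roots whose `p`-value strictly exceeds the total
`p`-value of any decomposition into at least two positive roots in `R^+_{q,θ}`. -/
def InSigma (t h : A → V) (q : V → ℂˣ) (θ : V → ℤ) (α : V → ℤ) : Prop :=
  Rplus t h q θ α ∧
    ∀ L : List (V → ℤ), 2 ≤ L.length → (∀ β ∈ L, Rplus t h q θ β) →
      L.sum = α → (L.map (pfun t h)).sum < pfun t h α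

/-- Flatness: every decomposition of `α` into positive roots in `R^+_{q,θ}` has
total `p`-value at most `p(α)`. -/
def Flat (t h : A → V) (q : V → ℂˣ) (θ : V → ℤ) (α : V → ℤ) : Prop :=
  ∀ L : List (V → ℤ), (∀ β ∈ L, Rplus t h q θ β) →
    L.sum = α → (L.map (pfun t h)).sum ≤ pfun t h α

set_option linter.unusedSectionVars false

section FlatAux
variable {V A : Type*} [Fintype V] [DecidableEq V] [Fintype A]
variable (t h : A → V)

/-- `x ↦ cartan x y` as an additive hom. -/
def cartanL (y : V → ℤ) : (V → ℤ) →+ ℤ where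
  toFun x := cartan t h x y
  map_zero' := by simp [cartan, euler]
  map_add' x x' := by
    simp only [cartan, euler, Pi.add_apply, add_mul, mul_add, Finset.sum_add_distrib]
    ring

lemma cartan_add_left (x x' y : V → ℤ) :
    cartan t h (x + x') y = cartan t h x y + cartan t h x' y :=
  (cartanL t h y).map_add x x'

lemma cartan_symm (x y : V → ℤ) : cartan t h x y = cartan t h y x := by
  simp [cartan]; ring

lemma cartan_smul_left (c : ℤ) (x y : V → ℤ) :
    cartan t h (c • x) y = c * cartan t h x y := by
  exact (cartanL t h y).map_zsmul c x

lemma cartan_neg_left (x y : V → ℤ) : cartan t h (-x) y = -cartan t h x y :=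
  (cartanL t h y).map_neg x

lemma cartan_sub_left (x x' y : V → ℤ) :
    cartan t h (x - x') y = cartan t h x y - cartan t h x' y :=
  (cartanL t h y).map_sub x x'

lemma cartan_add_right (x y y' : V → ℤ) :
    cartan t h x (y + y') = cartan t h x y + cartan t h x y' := by
  rw [cartan_symm, cartan_add_left, cartan_symm t h y, cartan_symm t h y']

lemma cartan_smul_right (c : ℤ) (x y : V → ℤ) :
    cartan t h x (c • y) = c * cartan t h x y := by
  rw [cartan_symm, cartan_smul_left, cartan_symm]

lemma cartan_list_sum (L : List (V → ℤ)) (y : V → ℤ) :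
    cartan t h L.sum y = (L.map (fun x => cartan t h x y)).sum :=
  map_list_sum (cartanL t h y) L

lemma cartan_self_eq (x : V → ℤ) : cartan t h x x = 2 * euler t h x x := by
  simp [cartan]; ring

/-- decomposition of a vector into coordinate vectors -/
lemma vec_repr (x : V → ℤ) : x = ∑ k, x k • evec k := by
  funext j
  simp [evec, Finset.sum_apply, Finset.sum_ite_eq]

lemma cartan_repr_right (x y : V → ℤ) :
    cartan t h x y = ∑ k, y k * cartan t h x (evec k) := by
  rw [cartan_symm]
  conv_lhs => rw [vec_repr y]
  rw [show cartan t h (∑ k, y k • evec k) x = (cartanL t h x) (∑ k, y k • evec k) from rfl,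
    map_sum]
  exact Finset.sum_congr rfl fun k _ => by
    rw [show (cartanL t h x) (y k • evec k) = cartan t h (y k • evec k) x from rfl,
      cartan_smul_left, cartan_symm]

end FlatAux
section FlatAuxB
variable {V A : Type*} [Fintype V] [DecidableEq V] [Fintype A]
variable (t h : A → V)

lemma evec_self (i : V) : evec i i = 1 := by simp [evec]

lemma evec_ne {i j : V} (hij : j ≠ i) : evec i j = 0 := by simp [evec, hij]

lemma evec_nonneg (i j : V) : 0 ≤ evec i j := by
  by_cases hj : j = i <;> simp [evec, hj]

lemma euler_evec_self {v : V} (hv : loopfree t h v) :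
    euler t h (evec v) (evec v) = 1 := by
  have h1 : (∑ i, evec v i * evec v i) = 1 := by
    simp [evec, Finset.sum_ite_eq]
  have h2 : (∑ a, evec v (t a) * evec v (h a)) = 0 := by
    refine Finset.sum_eq_zero fun a _ => ?_
    rcases eq_or_ne (t a) v with ht' | ht'
    · rcases eq_or_ne (h a) v with hh' | hh'
      · exact absurd ⟨ht', hh'⟩ (hv a)
      · simp [evec_ne hh']
    · simp [evec_ne ht']
  simp [euler, h1, h2]

lemma cartan_evec_self {v : V} (hv : loopfree t h v) :
    cartan t h (evec v) (evec v) = 2 := by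
  simp [cartan, euler_evec_self t h hv]

lemma cartan_evec_nonpos {i j : V} (hij : i ≠ j) :
    cartan t h (evec i) (evec j) ≤ 0 := by
  have h1 : (∑ k, evec i k * evec j k) = 0 := by
    refine Finset.sum_eq_zero fun k _ => ?_
    rcases eq_or_ne k i with rfl | hk
    · simp [evec_ne hij]
    · simp [evec_ne hk]
  have h1' : (∑ k, evec j k * evec i k) = 0 := by
    rw [← h1]; exact Finset.sum_congr rfl fun k _ => mul_comm _ _
  have e1 : 0 ≤ ∑ a, evec i (t a) * evec j (h a) :=
    Finset.sum_nonneg fun a _ => mul_nonneg (evec_nonneg _ _) (evec_nonneg _ _)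
  have e2 : 0 ≤ ∑ a, evec j (t a) * evec i (h a) :=
    Finset.sum_nonneg fun a _ => mul_nonneg (evec_nonneg _ _) (evec_nonneg _ _)
  simp only [cartan, euler, h1, h1']
  linarith

lemma srefl_eq (i : V) (x : V → ℤ) :
    srefl t h i x = x - cartan t h x (evec i) • evec i := by
  funext j
  simp [srefl, smul_eq_mul]

lemma srefl_apply_ne (i : V) (x : V → ℤ) {j : V} (hj : j ≠ i) :
    srefl t h i x j = x j := by
  simp [srefl, evec_ne hj]

lemma srefl_apply_self (i : V) (x : V → ℤ) :
    srefl t h i x i = x i - cartan t h x (evec i) := by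
  simp [srefl, evec_self]

lemma srefl_add (i : V) (x y : V → ℤ) :
    srefl t h i (x + y) = srefl t h i x + srefl t h i y := by
  simp only [srefl_eq, cartan_add_left, add_smul]
  abel

lemma srefl_smul (i : V) (c : ℤ) (x : V → ℤ) :
    srefl t h i (c • x) = c • srefl t h i x := by
  simp only [srefl_eq, cartan_smul_left, smul_sub, mul_smul]

lemma srefl_neg (i : V) (x : V → ℤ) : srefl t h i (-x) = -srefl t h i x := by
  have := srefl_smul t h i (-1) x
  simpa using this

lemma srefl_sub (i : V) (x y : V → ℤ) :
    srefl t h i (x - y) = srefl t h i x - srefl t h i y := by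
  rw [sub_eq_add_neg, srefl_add, srefl_neg, sub_eq_add_neg]

lemma cartan_sub_right (x y y' : V → ℤ) :
    cartan t h x (y - y') = cartan t h x y - cartan t h x y' := by
  rw [cartan_symm, cartan_sub_left, cartan_symm t h y, cartan_symm t h y']

lemma cartan_srefl {v : V} (hv : loopfree t h v) (x y : V → ℤ) :
    cartan t h (srefl t h v x) (srefl t h v y) = cartan t h x y := by
  rw [srefl_eq, srefl_eq, cartan_sub_left, cartan_sub_right, cartan_sub_right,
    cartan_smul_left, cartan_smul_left, cartan_smul_right, cartan_smul_right,
    cartan_evec_self t h hv, cartan_symm t h (evec v) y]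
  ring

lemma srefl_srefl {v : V} (hv : loopfree t h v) (x : V → ℤ) :
    srefl t h v (srefl t h v x) = x := by
  rw [srefl_eq, srefl_eq, cartan_sub_left, cartan_smul_left, cartan_evec_self t h hv]
  funext j
  simp only [Pi.sub_apply, Pi.smul_apply, smul_eq_mul]
  ring

lemma srefl_evec_self {v : V} (hv : loopfree t h v) :
    srefl t h v (evec v) = -evec v := by
  rw [srefl_eq, cartan_evec_self t h hv]
  funext j
  simp only [Pi.sub_apply, Pi.smul_apply, Pi.neg_apply, smul_eq_mul]
  ring

end FlatAuxB
section FlatAuxC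
variable {V A : Type*} [Fintype V] [DecidableEq V] [Fintype A]
variable (t h : A → V)

/-- apply a word of reflections -/
def app (w : List V) (x : V → ℤ) : V → ℤ := w.foldr (fun j y => srefl t h j y) x

/-- all letters loopfree -/
def good (w : List V) : Prop := ∀ j ∈ w, loopfree t h j

@[simp] lemma app_nil (x : V → ℤ) : app t h [] x = x := rfl

@[simp] lemma app_cons (j : V) (w : List V) (x : V → ℤ) :
    app t h (j :: w) x = srefl t h j (app t h w x) := rfl

lemma app_append (w u : List V) (x : V → ℤ) :
    app t h (w ++ u) x = app t h w (app t h u x) := by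
  induction w with
  | nil => rfl
  | cons j w ih => simp [ih]

lemma good_nil : good t h ([] : List V) := by intro j hj; simp at hj

lemma good_append {w u : List V} (hw : good t h w) (hu : good t h u) :
    good t h (w ++ u) := by
  intro j hj
  rcases List.mem_append.mp hj with hj | hj
  · exact hw j hj
  · exact hu j hj

lemma good_cons {j : V} {w : List V} (hj : loopfree t h j) (hw : good t h w) :
    good t h (j :: w) := by
  intro k hk
  rcases List.mem_cons.mp hk with rfl | hk
  · exact hj
  · exact hw k hk

lemma good_of_cons {j : V} {w : List V} (hw : good t h (j :: w)) :
    loopfree t h j ∧ good t h w :=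
  ⟨hw j List.mem_cons_self, fun k hk => hw k (List.mem_cons_of_mem j hk)⟩

lemma good_sublist {w u : List V} (hw : good t h w) (hsub : ∀ j ∈ u, j ∈ w) :
    good t h u := fun j hj => hw j (hsub j hj)

lemma good_reverse {w : List V} (hw : good t h w) : good t h w.reverse :=
  fun j hj => hw j (List.mem_reverse.mp hj)

lemma app_add {w : List V} (x y : V → ℤ) :
    app t h w (x + y) = app t h w x + app t h w y := by
  induction w with
  | nil => rfl
  | cons j w ih => simp [ih, srefl_add]

lemma app_smul {w : List V} (c : ℤ) (x : V → ℤ) :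
    app t h w (c • x) = c • app t h w x := by
  induction w with
  | nil => rfl
  | cons j w ih => rw [app_cons, ih, srefl_smul, app_cons]

lemma app_neg {w : List V} (x : V → ℤ) : app t h w (-x) = -app t h w x := by
  have := app_smul t h (w := w) (-1) x
  simpa using this

lemma app_sub {w : List V} (x y : V → ℤ) :
    app t h w (x - y) = app t h w x - app t h w y := by
  rw [sub_eq_add_neg, app_add, app_neg, sub_eq_add_neg]

lemma cartan_app {w : List V} (hw : good t h w) (x y : V → ℤ) :
    cartan t h (app t h w x) (app t h w y) = cartan t h x y := by
  induction w with
  | nil => rfl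
  | cons j w ih =>
    obtain ⟨hj, hw'⟩ := good_of_cons t h hw
    simp [cartan_srefl t h hj, ih hw']

lemma app_reverse_app {w : List V} (hw : good t h w) (x : V → ℤ) :
    app t h w.reverse (app t h w x) = x := by
  induction w with
  | nil => rfl
  | cons j w ih =>
    obtain ⟨hj, hw'⟩ := good_of_cons t h hw
    simp only [List.reverse_cons, app_append, app_cons, app_nil]
    rw [srefl_srefl t h hj, ih hw']

lemma app_app_reverse {w : List V} (hw : good t h w) (x : V → ℤ) :
    app t h w (app t h w.reverse x) = x := by
  have := app_reverse_app t h (good_reverse t h hw) x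
  rwa [List.reverse_reverse] at this

/-- length of an element expressed as a word of loopfree reflections -/
noncomputable def wlen (f : (V → ℤ) → (V → ℤ)) : ℕ :=
  sInf {n | ∃ w : List V, good t h w ∧ w.length = n ∧ app t h w = f}

lemma wlen_le {w : List V} (hw : good t h w) : wlen t h (app t h w) ≤ w.length :=
  Nat.sInf_le ⟨w, hw, rfl, rfl⟩

lemma exists_reduced {w : List V} (hw : good t h w) :
    ∃ w' : List V, good t h w' ∧ w'.length = wlen t h (app t h w) ∧
      app t h w' = app t h w := by
  have hne : {n | ∃ u : List V, good t h u ∧ u.length = n ∧ app t h u = app t h w}.Nonempty :=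
    ⟨w.length, w, hw, rfl, rfl⟩
  exact Nat.sInf_mem hne

lemma wlen_eq_of_eq {w u : List V} (hwu : app t h w = app t h u) :
    wlen t h (app t h w) = wlen t h (app t h u) := by rw [hwu]

lemma app_eq_inv_eq {w u : List V} (hw : good t h w) (hu : good t h u)
    (hwu : app t h w = app t h u) : app t h w.reverse = app t h u.reverse := by
  funext x
  have h1 : app t h w.reverse x = app t h w.reverse (app t h u (app t h u.reverse x)) :=
    by rw [app_app_reverse t h hu]
  rw [h1, ← hwu, app_reverse_app t h hw]

lemma wlen_reverse {w : List V} (hw : good t h w) :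
    wlen t h (app t h w.reverse) = wlen t h (app t h w) := by
  have key : ∀ u : List V, good t h u →
      wlen t h (app t h u.reverse) ≤ wlen t h (app t h u) := by
    intro u hu
    obtain ⟨u', hu', hlen, happ⟩ := exists_reduced t h hu
    have : app t h u'.reverse = app t h u.reverse := app_eq_inv_eq t h hu' hu happ
    calc wlen t h (app t h u.reverse) = wlen t h (app t h u'.reverse) := by rw [this]
      _ ≤ u'.reverse.length := wlen_le t h (good_reverse t h hu')
      _ = wlen t h (app t h u) := by rw [List.length_reverse, hlen]
  have h1 := key w hw
  have h2 := key w.reverse (good_reverse t h hw)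
  rw [List.reverse_reverse] at h2
  omega

end FlatAuxC
section FlatAuxD
variable {V A : Type*} [Fintype V] [DecidableEq V] [Fintype A]
variable (t h : A → V)

/-- componentwise nonnegative -/
def posv (x : V → ℤ) : Prop := ∀ k, 0 ≤ x k

lemma r2key {a b c : ℤ} (h1 : a * a + b * b + a * b * c = 1) (ha : 0 ≤ a)
    (hb : 0 ≤ b) (hc : c ≤ 0) (hpos : 0 < a + b * c) : a = 1 ∧ b = 0 := by
  have hbc : b * c ≤ 0 := mul_nonpos_of_nonneg_of_nonpos hb hc
  have h2 : 1 ≤ a := by omega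
  have h3 : 1 ≤ a + b * c := by omega
  have h4 : 1 * 1 ≤ a * (a + b * c) := mul_le_mul h2 h3 (by linarith) (by linarith)
  have h5 : b * b ≤ 0 := by nlinarith
  have hb0 : b = 0 := by nlinarith [mul_self_nonneg b]
  subst hb0
  constructor
  · nlinarith
  · rfl

/-- rank-2 pair vectors -/
lemma pair_apply_left {s t' : V} (hst : s ≠ t') (a b : ℤ) :
    (a • evec s + b • evec t') s = a := by
  simp [Pi.add_apply, Pi.smul_apply, evec_self, evec_ne hst, smul_eq_mul]

lemma pair_apply_right {s t' : V} (hst : s ≠ t') (a b : ℤ) :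
    (a • evec s + b • evec t') t' = b := by
  simp [Pi.add_apply, Pi.smul_apply, evec_self, evec_ne (Ne.symm hst), smul_eq_mul]

lemma cartan_pair_left (s t' : V) (a b : ℤ) (y : V → ℤ) :
    cartan t h (a • evec s + b • evec t') y
      = a * cartan t h (evec s) y + b * cartan t h (evec t') y := by
  rw [cartan_add_left, cartan_smul_left, cartan_smul_left]

lemma pair_posv {s t' : V} (hst : s ≠ t') {a b : ℤ} (ha : 0 ≤ a) (hb : 0 ≤ b) :
    posv (a • evec s + b • evec t') := by
  intro k
  simp only [Pi.add_apply, Pi.smul_apply, smul_eq_mul]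
  have := evec_nonneg s k
  have := evec_nonneg t' k
  positivity

lemma pair_neg (s t' : V) (a b : ℤ) :
    -(a • evec s + b • evec t') = (-a) • evec s + (-b) • evec t' := by
  funext k
  simp only [Pi.neg_apply, Pi.add_apply, Pi.smul_apply, smul_eq_mul]
  ring

/-- the reflection of a pair vector at `s` -/
lemma srefl_pair {s t' : V} (hs : loopfree t h s) (a b : ℤ) :
    srefl t h s (a • evec s + b • evec t')
      = (-a - b * cartan t h (evec s) (evec t')) • evec s + b • evec t' := by
  set c := cartan t h (evec s) (evec t') with hc
  have hcar : cartan t h (a • evec s + b • evec t') (evec s) = 2 * a + b * c := by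
    rw [cartan_pair_left, cartan_evec_self t h hs, cartan_symm t h (evec t') (evec s), ← hc]
    ring
  rw [srefl_eq, hcar]
  funext k
  simp only [Pi.sub_apply, Pi.add_apply, Pi.smul_apply, smul_eq_mul]
  ring

/-- one reflection step preserves rank-2 coherence data (positive case) -/
lemma r2step_pos {s t' : V} (hs : loopfree t h s) (hst : s ≠ t') {a b : ℤ}
    (hnorm : a * a + b * b + a * b * cartan t h (evec s) (evec t') = 1)
    (ha : 0 ≤ a) (hb : 0 ≤ b) :
    ∃ a' b' : ℤ, srefl t h s (a • evec s + b • evec t') = a' • evec s + b' • evec t' ∧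
      a' * a' + b' * b' + a' * b' * cartan t h (evec s) (evec t') = 1 ∧
      (0 ≤ a' ∧ 0 ≤ b' ∨ a' ≤ 0 ∧ b' ≤ 0) := by
  set c := cartan t h (evec s) (evec t') with hc
  refine ⟨-a - b * c, b, srefl_pair t h hs a b, by linear_combination hnorm, ?_⟩
  by_cases hle : 0 ≤ -a - b * c
  · exact Or.inl ⟨hle, hb⟩
  · have hpos : 0 < a + b * c := by omega
    have hcle : c ≤ 0 := cartan_evec_nonpos t h hst
    obtain ⟨ha1, hb0⟩ := r2key hnorm ha hb hcle hpos
    refine Or.inr ⟨by omega, by omega⟩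

lemma r2step {s t' : V} (hs : loopfree t h s) (hst : s ≠ t') {a b : ℤ}
    (hnorm : a * a + b * b + a * b * cartan t h (evec s) (evec t') = 1)
    (hab : 0 ≤ a ∧ 0 ≤ b ∨ a ≤ 0 ∧ b ≤ 0) :
    ∃ a' b' : ℤ, srefl t h s (a • evec s + b • evec t') = a' • evec s + b' • evec t' ∧
      a' * a' + b' * b' + a' * b' * cartan t h (evec s) (evec t') = 1 ∧
      (0 ≤ a' ∧ 0 ≤ b' ∨ a' ≤ 0 ∧ b' ≤ 0) := by
  rcases hab with ⟨ha, hb⟩ | ⟨ha, hb⟩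
  · exact r2step_pos t h hs hst hnorm ha hb
  · have hnorm' : (-a) * (-a) + (-b) * (-b) + (-a) * (-b) * cartan t h (evec s) (evec t') = 1 := by
      linear_combination hnorm
    obtain ⟨a', b', heq, hn, hd⟩ := r2step_pos t h hs hst hnorm' (by omega) (by omega)
    refine ⟨-a', -b', ?_, by linear_combination hn, ?_⟩
    · have : srefl t h s (a • evec s + b • evec t')
          = -srefl t h s ((-a) • evec s + (-b) • evec t') := by
        rw [← srefl_neg, pair_neg]
        norm_num
      rw [this, heq, pair_neg]
    · rcases hd with ⟨h1, h2⟩ | ⟨h1, h2⟩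
      · exact Or.inr ⟨by omega, by omega⟩
      · exact Or.inl ⟨by omega, by omega⟩

end FlatAuxD
section FlatAuxE
variable {V A : Type*} [Fintype V] [DecidableEq V] [Fintype A]
variable (t h : A → V)

/-- word supported on two letters -/
def good2 (s t' : V) (w : List V) : Prop := ∀ j ∈ w, j = s ∨ j = t'

lemma good2_good {s t' : V} (hs : loopfree t h s) (ht' : loopfree t h t')
    {w : List V} (hw : good2 s t' w) : good t h w := by
  intro j hj
  rcases hw j hj with rfl | rfl
  · exact hs
  · exact ht'

noncomputable def wlen2 (s t' : V) (f : (V → ℤ) → (V → ℤ)) : ℕ :=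
  sInf {n | ∃ w : List V, good2 s t' w ∧ w.length = n ∧ app t h w = f}

lemma wlen2_le {s t' : V} {w : List V} (hw : good2 s t' w) :
    wlen2 t h s t' (app t h w) ≤ w.length :=
  Nat.sInf_le ⟨w, hw, rfl, rfl⟩

lemma exists_reduced2 {s t' : V} {w : List V} (hw : good2 s t' w) :
    ∃ w' : List V, good2 s t' w' ∧ w'.length = wlen2 t h s t' (app t h w) ∧
      app t h w' = app t h w :=
  Nat.sInf_mem (⟨w.length, w, hw, rfl, rfl⟩ :
    {n | ∃ u : List V, good2 s t' u ∧ u.length = n ∧ app t h u = app t h w}.Nonempty)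

/-- rank-2 coherence of images of coordinate vectors -/
lemma r2coh {s t' : V} (hs : loopfree t h s) (ht' : loopfree t h t') (hst : s ≠ t')
    {z : List V} (hz : good2 s t' z) {i : V} (hi : i = s ∨ i = t') :
    ∃ a b : ℤ, app t h z (evec i) = a • evec s + b • evec t' ∧
      a * a + b * b + a * b * cartan t h (evec s) (evec t') = 1 ∧
      (0 ≤ a ∧ 0 ≤ b ∨ a ≤ 0 ∧ b ≤ 0) := by
  induction z with
  | nil =>
    rcases hi with rfl | rfl
    · exact ⟨1, 0, by funext k; simp [Pi.add_apply, Pi.smul_apply], by ring,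
        Or.inl ⟨by norm_num, le_refl 0⟩⟩
    · exact ⟨0, 1, by funext k; simp [Pi.add_apply, Pi.smul_apply], by ring,
        Or.inl ⟨le_refl 0, by norm_num⟩⟩
  | cons j z ih =>
    have hz' : good2 s t' z := fun k hk => hz k (List.mem_cons_of_mem j hk)
    obtain ⟨a, b, heq, hnorm, hab⟩ := ih hz'
    have hj : j = s ∨ j = t' := hz j List.mem_cons_self
    rcases hj with rfl | rfl
    · obtain ⟨a', b', heq', hnorm', hab'⟩ := r2step t h hs hst hnorm hab
      exact ⟨a', b', by rw [app_cons, heq, heq'], hnorm', hab'⟩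
    · -- reflection at t' : use r2step with roles swapped
      have hsymm : cartan t h (evec j) (evec s) = cartan t h (evec s) (evec j) :=
        cartan_symm t h _ _
      have hnorm2 : b * b + a * a + b * a * cartan t h (evec j) (evec s) = 1 := by
        rw [hsymm]; linear_combination hnorm
      have hab2 : 0 ≤ b ∧ 0 ≤ a ∨ b ≤ 0 ∧ a ≤ 0 := by tauto
      obtain ⟨a', b', heq', hnorm', hab'⟩ := r2step t h ht' (Ne.symm hst) hnorm2 hab2
      refine ⟨b', a', ?_, ?_, by tauto⟩
      · rw [app_cons, heq, add_comm (a • evec s), heq', add_comm]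
      · rw [← hsymm]; linear_combination hnorm'

lemma coeff_nonneg_of_posv {s t' : V} (hst : s ≠ t') {a b : ℤ}
    (hnorm : a * a + b * b + a * b * cartan t h (evec s) (evec t') = 1)
    (hab : 0 ≤ a ∧ 0 ≤ b ∨ a ≤ 0 ∧ b ≤ 0)
    (hp : posv (a • evec s + b • evec t')) : 0 ≤ a ∧ 0 ≤ b := by
  have has : 0 ≤ a := by have := hp s; rwa [pair_apply_left hst] at this
  have hbs : 0 ≤ b := by have := hp t'; rwa [pair_apply_right hst] at this
  exact ⟨has, hbs⟩

lemma cartan_pair_evec_left {s t' : V} (hs : loopfree t h s) (a b : ℤ) :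
    cartan t h (a • evec s + b • evec t') (evec s)
      = 2 * a + b * cartan t h (evec s) (evec t') := by
  rw [cartan_pair_left, cartan_evec_self t h hs, cartan_symm t h (evec t') (evec s)]
  ring

lemma cartan_pair_evec_right {s t' : V} (ht' : loopfree t h t') (a b : ℤ) :
    cartan t h (a • evec s + b • evec t') (evec t')
      = a * cartan t h (evec s) (evec t') + 2 * b := by
  rw [cartan_pair_left, cartan_evec_self t h ht']
  ring

/-- conjugation: if `u` maps `e_s` to `e_j` then `u ∘ s_s = s_j ∘ u`. -/
lemma app_srefl_conj {u : List V} {j s : V} (hu : good t h u) (hs : loopfree t h s)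
    (hus : app t h u (evec s) = evec j) (x : V → ℤ) :
    app t h u (srefl t h s x) = srefl t h j (app t h u x) := by
  rw [srefl_eq, app_sub, app_smul, hus, srefl_eq]
  have : cartan t h (app t h u x) (evec j) = cartan t h x (evec s) := by
    rw [← hus, cartan_app t h hu]
  rw [this]

lemma exists_transition {P : ℕ → Prop} :
    ∀ k : ℕ, P k → ¬ P 0 → ∃ i, i < k ∧ ¬ P i ∧ P (i + 1) := by
  intro k
  induction k with
  | zero => intro hk h0; exact absurd hk h0
  | succ k ih =>
    intro hk h0
    by_cases hPk : P k
    · obtain ⟨i, hik, h1, h2⟩ := ih hPk h0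
      exact ⟨i, Nat.lt_succ_of_lt hik, h1, h2⟩
    · exact ⟨k, Nat.lt_succ_self k, hPk, hk⟩

/-- the key "exchange" chain argument in rank two -/
lemma r2chain {s t' : V} (hs : loopfree t h s) (ht' : loopfree t h t') (hst : s ≠ t')
    {z : List V} (hz : good2 s t' z) (hnp : ¬ posv (app t h z (evec s))) :
    ∃ z2 : List V, good2 s t' z2 ∧ z2.length + 1 = z.length ∧
      app t h z2 = app t h (z ++ [s]) := by
  have hPk : posv (app t h (z.drop z.length) (evec s)) := by
    rw [List.drop_length]
    intro k; exact evec_nonneg s k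
  have hP0 : ¬ posv (app t h (z.drop 0) (evec s)) := by simpa using hnp
  obtain ⟨i, hik, hPi, hPi1⟩ :=
    exists_transition (P := fun n => posv (app t h (z.drop n) (evec s))) z.length hPk hP0
  set j := z[i] with hjdef
  have hdrop : z.drop i = j :: z.drop (i + 1) := List.drop_eq_getElem_cons hik
  have hji : j = s ∨ j = t' := hz j (List.getElem_mem hik)
  have hjl : loopfree t h j := by rcases hji with rfl | rfl; exacts [hs, ht']
  have hgood_drop : good2 s t' (z.drop (i + 1)) :=
    fun k hk => hz k (List.drop_subset _ _ hk)
  set γ := app t h (z.drop (i + 1)) (evec s) with hγ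
  have hβ : app t h (z.drop i) (evec s) = srefl t h j γ := by
    rw [hdrop, app_cons]
  obtain ⟨a, b, heq, hnorm, hab⟩ := r2coh t h hs ht' hst hgood_drop (Or.inl rfl)
  have habp : 0 ≤ a ∧ 0 ≤ b := coeff_nonneg_of_posv t h hst hnorm hab (heq ▸ hPi1)
  -- the reflected vector is not positive, find the negative coordinate
  have hnpj : srefl t h j γ j < 0 := by
    by_contra hcon
    push_neg at hcon
    apply hPi
    rw [hβ]
    intro k
    rcases eq_or_ne k j with rfl | hk
    · exact hcon
    · rw [srefl_apply_ne t h j γ hk]; exact hPi1 k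
  have hc : cartan t h (evec s) (evec t') ≤ 0 := cartan_evec_nonpos t h hst
  have hnpj' : γ j - cartan t h γ (evec j) < 0 := by
    rw [← srefl_apply_self]; exact hnpj
  -- conclude γ = evec j
  have hγj : γ = evec j := by
    rcases hji with rfl | rfl
    · -- j = s
      have h1 : γ j = a := by rw [hγ, heq, pair_apply_left hst]
      have h2 : cartan t h γ (evec j) = 2 * a + b * cartan t h (evec j) (evec t') := by
        rw [hγ, heq]; exact cartan_pair_evec_left t h hs a b
      rw [h1, h2] at hnpj'
      have hpos : 0 < a + b * cartan t h (evec j) (evec t') := by omega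
      obtain ⟨ha1, hb0⟩ := r2key hnorm habp.1 habp.2 hc hpos
      rw [hγ, heq, ha1, hb0]
      funext k; simp [Pi.add_apply, Pi.smul_apply]
    · -- j = t'
      have h1 : γ j = b := by rw [hγ, heq, pair_apply_right hst]
      have h2 : cartan t h γ (evec j) = a * cartan t h (evec s) (evec j) + 2 * b := by
        rw [hγ, heq]; exact cartan_pair_evec_right t h ht' a b
      rw [h1, h2] at hnpj'
      have hpos : 0 < b + a * cartan t h (evec s) (evec j) := by omega
      have hnorm2 : b * b + a * a + b * a * cartan t h (evec s) (evec j) = 1 := by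
        linear_combination hnorm
      obtain ⟨hb1, ha0⟩ := r2key hnorm2 habp.2 habp.1 hc hpos
      rw [hγ, heq, ha0, hb1]
      funext k; simp [Pi.add_apply, Pi.smul_apply]
  -- now build the shorter word
  have hu : good t h (z.drop (i + 1)) := good2_good t h hs ht' hgood_drop
  have husγ : app t h (z.drop (i + 1)) (evec s) = evec j := by rw [← hγ]; exact hγj
  have hconj := fun x => app_srefl_conj t h hu hs husγ x
  refine ⟨z.take i ++ z.drop (i + 1), ?_, ?_, ?_⟩
  · intro k hk
    rcases List.mem_append.mp hk with hk | hk
    · exact hz k (List.take_subset _ _ hk)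
    · exact hz k (List.drop_subset _ _ hk)
  · rw [List.length_append, List.length_take, List.length_drop]
    omega
  · funext x
    have hsplit : z = z.take i ++ z.drop i := (List.take_append_drop i z).symm
    calc app t h (z.take i ++ z.drop (i + 1)) x
        = app t h (z.take i) (app t h (z.drop (i + 1)) x) := app_append t h _ _ x
      _ = app t h (z.take i) (srefl t h j (srefl t h j (app t h (z.drop (i+1)) x))) := by
          rw [srefl_srefl t h hjl]
      _ = app t h (z.take i) (srefl t h j (app t h (z.drop (i+1)) (srefl t h s x))) := by
          rw [← hconj x]
      _ = app t h (z.take i) (app t h (z.drop i) (srefl t h s x)) := by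
          rw [hdrop, app_cons]
      _ = app t h z (srefl t h s x) := by rw [← app_append, ← hsplit]
      _ = app t h (z ++ [s]) x := by rw [app_append]; rfl

/-- rank-2 positivity from non-descent -/
lemma r2T {s t' : V} (hs : loopfree t h s) (ht' : loopfree t h t') (hst : s ≠ t')
    {z : List V} (hz : good2 s t' z)
    (hlen : wlen2 t h s t' (app t h z) ≤ wlen2 t h s t' (app t h (z ++ [s]))) :
    posv (app t h z (evec s)) := by
  obtain ⟨z', hz', hlen', happ'⟩ := exists_reduced2 t h hz
  by_contra hnp
  have hnp' : ¬ posv (app t h z' (evec s)) := by rw [happ']; exact hnp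
  obtain ⟨z2, hz2, hl2, ha2⟩ := r2chain t h hs ht' hst hz' hnp'
  have he : app t h (z' ++ [s]) = app t h (z ++ [s]) := by
    funext x; rw [app_append, app_append, happ']
  have h1 : wlen2 t h s t' (app t h (z ++ [s])) ≤ z2.length := by
    rw [← he, ← ha2]; exact wlen2_le t h hz2
  omega

end FlatAuxE
section FlatAuxF
variable {V A : Type*} [Fintype V] [DecidableEq V] [Fintype A]
variable (t h : A → V)

lemma app_concat (w : List V) (s : V) (x : V → ℤ) :
    app t h (w ++ [s]) x = app t h w (srefl t h s x) := by
  rw [app_append]; rfl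

lemma wlen_le' {u : List V} {g : (V → ℤ) → (V → ℤ)} (hu : good t h u)
    (hg : app t h u = g) : wlen t h g ≤ u.length :=
  Nat.sInf_le ⟨u, hu, rfl, hg⟩

lemma wlen2_le' {s t' : V} {u : List V} {g : (V → ℤ) → (V → ℤ)} (hu : good2 s t' u)
    (hg : app t h u = g) : wlen2 t h s t' g ≤ u.length :=
  Nat.sInf_le ⟨u, hu, rfl, hg⟩

lemma good2_nil (s t' : V) : good2 s t' ([] : List V) := fun j hj => by simp at hj

lemma good2_append {s t' : V} {w u : List V} (hw : good2 s t' w) (hu : good2 s t' u) :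
    good2 s t' (w ++ u) := by
  intro j hj
  rcases List.mem_append.mp hj with hj | hj
  · exact hw j hj
  · exact hu j hj

lemma good2_single_left (s t' : V) : good2 s t' [s] := by
  intro j hj; simp at hj; exact Or.inl hj

lemma good2_single_right (s t' : V) : good2 s t' [t'] := by
  intro j hj; simp at hj; exact Or.inr hj

/-- Descent into a rank-2 coset. -/
lemma descent {s t' : V} (hs : loopfree t h s) (ht' : loopfree t h t') :
    ∀ n : ℕ, ∀ w : List V, good t h w → wlen t h (app t h w) ≤ n →
    ∃ v z : List V, good t h v ∧ good2 s t' z ∧ app t h w = app t h (v ++ z) ∧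
      wlen t h (app t h w) = wlen t h (app t h v) + z.length ∧
      z.length = wlen2 t h s t' (app t h z) ∧
      wlen t h (app t h v) ≤ wlen t h (app t h (v ++ [s])) ∧
      wlen t h (app t h v) ≤ wlen t h (app t h (v ++ [t'])) := by
  intro n
  induction n with
  | zero =>
    intro w hw hn
    refine ⟨w, [], hw, good2_nil s t', by rw [List.append_nil], by simp, ?_, ?_, ?_⟩
    · have h0 : wlen2 t h s t' (app t h ([] : List V)) ≤ 0 :=
        wlen2_le' t h (good2_nil s t') rfl
      simp only [List.length_nil]
      omega
    · omega
    · omega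
  | succ n ih =>
    intro w hw hn
    have step : ∀ r : V, loopfree t h r → good2 s t' [r] →
        wlen t h (app t h (w ++ [r])) < wlen t h (app t h w) →
        ∃ v z : List V, good t h v ∧ good2 s t' z ∧ app t h w = app t h (v ++ z) ∧
          wlen t h (app t h w) = wlen t h (app t h v) + z.length ∧
          z.length = wlen2 t h s t' (app t h z) ∧
          wlen t h (app t h v) ≤ wlen t h (app t h (v ++ [s])) ∧
          wlen t h (app t h v) ≤ wlen t h (app t h (v ++ [t'])) := by
      intro r hr hr2 hdesc
      have hw1 : good t h (w ++ [r]) :=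
        good_append t h hw (fun j hj => by simp at hj; rw [hj]; exact hr)
      have hback : ∀ x, app t h ((w ++ [r]) ++ [r]) x = app t h w x := by
        intro x
        rw [app_concat, app_concat, srefl_srefl t h hr]
      have hle : wlen t h (app t h w) ≤ wlen t h (app t h (w ++ [r])) + 1 := by
        obtain ⟨u1, hu1, hlen1, happ1⟩ := exists_reduced t h hw1
        have : app t h (u1 ++ [r]) = app t h w := by
          funext x
          rw [app_concat, happ1, ← app_concat, hback]
        have := wlen_le' t h
          (good_append t h hu1 (fun j hj => by simp at hj; rw [hj]; exact hr)) this
        simp at this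
        omega
      have hw1n : wlen t h (app t h (w ++ [r])) ≤ n := by omega
      obtain ⟨v, z, hv, hz, happ, hlen, hz2, hvs, hvt⟩ := ih (w ++ [r]) hw1 hw1n
      refine ⟨v, z ++ [r], hv, good2_append hz hr2, ?_, ?_, ?_, hvs, hvt⟩
      · funext x
        calc app t h w x = app t h ((w ++ [r]) ++ [r]) x := (hback x).symm
          _ = app t h (w ++ [r]) (srefl t h r x) := by rw [app_concat]
          _ = app t h (v ++ z) (srefl t h r x) := by rw [happ]
          _ = app t h v (app t h z (srefl t h r x)) := app_append t h _ _ _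
          _ = app t h v (app t h (z ++ [r]) (x)) := by rw [app_concat]
          _ = app t h (v ++ (z ++ [r])) x := (app_append t h _ _ _).symm
      · have : wlen t h (app t h w) = wlen t h (app t h (w ++ [r])) + 1 := by omega
        rw [this, hlen, List.length_append]
        simp
        omega
      · -- z ++ [r] is rank-2 reduced
        have hle1 : wlen2 t h s t' (app t h (z ++ [r])) ≤ (z ++ [r]).length :=
          wlen2_le t h (good2_append hz hr2)
        have hge : (z ++ [r]).length ≤ wlen2 t h s t' (app t h (z ++ [r])) := by
          obtain ⟨v', hv', hlenv', happv'⟩ := exists_reduced t h hv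
          obtain ⟨y, hy, hleny, happy⟩ := exists_reduced2 t h (good2_append hz hr2)
          have hcomp : app t h (v' ++ y) = app t h w := by
            funext x
            calc app t h (v' ++ y) x = app t h v' (app t h y x) := app_append t h _ _ _
              _ = app t h v (app t h (z ++ [r]) x) := by rw [happv', happy]
              _ = app t h (v ++ (z ++ [r])) x := (app_append t h _ _ _).symm
              _ = app t h w x := by
                  rw [app_append, app_concat, ← app_append, ← happ, app_concat,
                    srefl_srefl t h hr]
          have hwle := wlen_le' t h
            (good_append t h hv' (good2_good t h hs ht' hy)) hcomp
          rw [List.length_append] at hwle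
          have hlenz : wlen t h (app t h w) = wlen t h (app t h v) + z.length + 1 := by omega
          rw [List.length_append]
          simp only [List.length_singleton]
          omega
        omega
    by_cases h1 : wlen t h (app t h (w ++ [s])) < wlen t h (app t h w)
    · exact step s hs (good2_single_left s t') h1
    · by_cases h2 : wlen t h (app t h (w ++ [t'])) < wlen t h (app t h w)
      · exact step t' ht' (good2_single_right s t') h2
      · push_neg at h1 h2
        refine ⟨w, [], hw, good2_nil s t', by rw [List.append_nil], by simp, ?_, h1, h2⟩
        have h0 : wlen2 t h s t' (app t h ([] : List V)) ≤ 0 :=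
          wlen2_le' t h (good2_nil s t') rfl
        simp only [List.length_nil]
        omega

end FlatAuxF
section FlatAuxG
variable {V A : Type*} [Fintype V] [DecidableEq V] [Fintype A]
variable (t h : A → V)

/-- MAIN combinatorial theorem: no descent at `s` implies `w(e_s)` is nonneg. -/
theorem globalT : ∀ n : ℕ, ∀ w : List V, good t h w → wlen t h (app t h w) ≤ n →
    ∀ s : V, loopfree t h s → wlen t h (app t h w) ≤ wlen t h (app t h (w ++ [s])) →
    posv (app t h w (evec s)) := by
  intro n
  induction n using Nat.strong_induction_on with
  | _ n ihn =>
  intro w hw hn s hs hasc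
  rcases Nat.lt_or_ge (wlen t h (app t h w)) n with hlt | hge
  · exact ihn _ hlt w hw le_rfl s hs hasc
  have hm : wlen t h (app t h w) = n := le_antisymm hn hge
  obtain ⟨w', hw', hlen', happ'⟩ := exists_reduced t h hw
  rcases Nat.eq_zero_or_pos n with hn0 | hpos
  · -- identity
    have : w' = [] := List.length_eq_zero_iff.mp (by omega)
    have hid : app t h w (evec s) = evec s := by
      rw [← happ', this]; rfl
    rw [hid]; exact fun k => evec_nonneg s k
  · -- w' is nonempty; take its last letter t0
    have hne : w' ≠ [] := by
      intro hcon
      rw [hcon] at hlen'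
      simp at hlen'
      omega
    set t0 := w'.getLast hne with ht0
    have ht0mem : t0 ∈ w' := List.getLast_mem hne
    have ht0l : loopfree t h t0 := hw' t0 ht0mem
    have hsplit : w'.dropLast ++ [t0] = w' := List.dropLast_append_getLast hne
    have hWT0 : app t h (w ++ [t0]) = app t h w'.dropLast := by
      funext x
      have hstep : app t h w' (srefl t h t0 x) = app t h w'.dropLast x := by
        conv_lhs => rw [← hsplit]
        rw [app_concat, srefl_srefl t h ht0l]
      rw [app_concat, ← happ', hstep]
    have hwt0_lt : wlen t h (app t h (w ++ [t0])) < n := by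
      have hle := wlen_le' t h (good_sublist t h hw'
        (fun j hj => by rw [← hsplit]; exact List.mem_append_left _ hj)) hWT0.symm
      have : w'.dropLast.length = n - 1 := by
        rw [List.length_dropLast, hlen', hm]
      omega
    have hst0 : s ≠ t0 := by
      intro hcon
      rw [hcon] at hasc
      omega
    -- descent
    obtain ⟨v, z, hv, hz, happ, hlen, hz2, hvs, hvt⟩ :=
      descent t h hs ht0l n w hw hn
    -- z is nonempty
    have hzne : z ≠ [] := by
      intro hcon
      rw [hcon] at happ hlen
      rw [List.append_nil] at happ
      have : app t h (v ++ [t0]) = app t h (w ++ [t0]) := by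
        funext x; rw [app_concat, app_concat, happ]
      rw [this] at hvt
      simp at hlen
      omega
    have hzlen : 1 ≤ z.length := List.length_pos_iff.mpr hzne
    have hvlt : wlen t h (app t h v) < n := by omega
    -- inductive positivity at v
    have hposs : posv (app t h v (evec s)) :=
      ihn _ hvlt v hv le_rfl s hs hvs
    have hpost : posv (app t h v (evec t0)) :=
      ihn _ hvlt v hv le_rfl t0 ht0l hvt
    -- rank-2 non-descent
    have hr2asc : wlen2 t h s t0 (app t h z) ≤ wlen2 t h s t0 (app t h (z ++ [s])) := by
      obtain ⟨v', hv', hlenv', happv'⟩ := exists_reduced t h hv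
      obtain ⟨y, hy, hleny, happy⟩ := exists_reduced2 t h (good2_append hz (good2_single_left s t0))
      have hcomp : app t h (v' ++ y) = app t h (w ++ [s]) := by
        funext x
        have h1 : app t h (v' ++ y) x = app t h v (app t h (z ++ [s]) x) := by
          rw [app_append, happv', happy]
        rw [h1, app_concat, ← app_append, ← happ, app_concat]
      have hwle := wlen_le' t h
        (good_append t h hv' (good2_good t h hs ht0l hy)) hcomp
      rw [List.length_append, hlenv', hleny] at hwle
      omega
    have hposz := r2T t h hs ht0l hst0 hz hr2asc
    obtain ⟨a, b, heq, hnorm, hab⟩ := r2coh t h hs ht0l hst0 hz (Or.inl rfl)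
    have habp : 0 ≤ a ∧ 0 ≤ b :=
      coeff_nonneg_of_posv t h hst0 hnorm hab (heq ▸ hposz)
    -- conclude
    have hfinal : app t h w (evec s)
        = a • app t h v (evec s) + b • app t h v (evec t0) := by
      rw [happ, app_append, heq, app_add, app_smul, app_smul]
    rw [hfinal]
    intro k
    simp only [Pi.add_apply, Pi.smul_apply, smul_eq_mul]
    have := hposs k
    have := hpost k
    have := habp.1
    have := habp.2
    positivity

/-- sign coherence for images of simple roots -/
theorem word_coh {w : List V} (hw : good t h w) {s : V} (hs : loopfree t h s) :
    posv (app t h w (evec s)) ∨ posv (-app t h w (evec s)) := by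
  by_cases hasc : wlen t h (app t h w) ≤ wlen t h (app t h (w ++ [s]))
  · exact Or.inl (globalT t h _ w hw le_rfl s hs hasc)
  · push_neg at hasc
    have hw1 : good t h (w ++ [s]) :=
      good_append t h hw (fun j hj => by simp at hj; rw [hj]; exact hs)
    have hback : app t h ((w ++ [s]) ++ [s]) = app t h w := by
      funext x
      rw [app_concat, app_concat, srefl_srefl t h hs]
    have hasc1 : wlen t h (app t h (w ++ [s])) ≤ wlen t h (app t h ((w ++ [s]) ++ [s])) := by
      rw [hback]
      omega
    have hpos := globalT t h _ (w ++ [s]) hw1 le_rfl s hs hasc1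
    right
    have : app t h (w ++ [s]) (evec s) = -app t h w (evec s) := by
      rw [app_concat, srefl_evec_self t h hs, app_neg]
    rw [this] at hpos
    exact hpos

/-- fundamental-region vectors only grow under reflections -/
theorem fund_mono {α : V → ℤ} (hα : ∀ i, 0 ≤ α i)
    (hcar : ∀ i, cartan t h α (evec i) ≤ 0) :
    ∀ n : ℕ, ∀ w : List V, good t h w → wlen t h (app t h w) ≤ n →
    ∀ k, α k ≤ app t h w α k := by
  intro n
  induction n using Nat.strong_induction_on with
  | _ n ihn =>
  intro w hw hn k
  obtain ⟨w', hw', hlen', happ'⟩ := exists_reduced t h hw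
  rcases Nat.eq_zero_or_pos (wlen t h (app t h w)) with h0 | hpos
  · have : w' = [] := List.length_eq_zero_iff.mp (by omega)
    rw [← happ', this]
    exact le_rfl
  · have hne : w' ≠ [] := by
      intro hcon
      rw [hcon] at hlen'; simp at hlen'; omega
    obtain ⟨j, w'', rfl⟩ := List.exists_cons_of_ne_nil hne
    have hjl : loopfree t h j := hw' j List.mem_cons_self
    have hw'' : good t h w'' := (good_of_cons t h hw').2
    set m := wlen t h (app t h w) with hmdef
    have hm'' : wlen t h (app t h w'') = m - 1 := by
      have hle : wlen t h (app t h w'') ≤ m - 1 := by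
        have h1 := wlen_le t h hw''
        have h2 : w''.length + 1 = m := by
          rw [← hlen']; rfl
        omega
      have hge : m ≤ wlen t h (app t h w'') + 1 := by
        obtain ⟨u'', hu'', hlenu'', happu''⟩ := exists_reduced t h hw''
        have : app t h (j :: u'') = app t h w := by
          funext x
          rw [app_cons, happu'', ← app_cons, happ']
        have := wlen_le' t h (good_cons t h hjl hu'') this
        simp at this
        omega
      omega
    -- the key inequality : (w'' α, e_j) ≤ 0
    have hkey : cartan t h (app t h w'' α) (evec j) ≤ 0 := by
      set u := w''.reverse with hu
      have hugood : good t h u := good_reverse t h hw''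
      have hulen : wlen t h (app t h u) = m - 1 := by
        rw [hu, wlen_reverse t h hw'', hm'']
      have hconc : (u ++ [j]).reverse = j :: w'' := by
        simp [hu]
      have huj : wlen t h (app t h (u ++ [j])) = m := by
        have := wlen_reverse t h (good_append t h hugood
          (fun i hi => by rw [List.mem_singleton.mp hi]; exact hjl))
        rw [hconc, happ'] at this
        omega
      have hposu : posv (app t h u (evec j)) := by
        apply globalT t h _ u hugood le_rfl j hjl
        omega
      have hinv : cartan t h (app t h w'' α) (evec j)
          = cartan t h α (app t h u (evec j)) := by
        conv_lhs => rw [show evec j = app t h w'' (app t h u (evec j)) from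
          (app_app_reverse t h hw'' (evec j)).symm]
        rw [cartan_app t h hw'']
      rw [hinv, cartan_repr_right]
      refine Finset.sum_nonpos fun i _ => ?_
      exact mul_nonpos_of_nonneg_of_nonpos (hposu i) (hcar i)
    have hih : α k ≤ app t h w'' α k := ihn (m - 1) (by omega) w'' hw'' (by omega) k
    have hstep : α k ≤ app t h (j :: w'') α k := by
      refine le_trans hih ?_
      rw [app_cons, srefl_eq]
      simp only [Pi.sub_apply, Pi.smul_apply, smul_eq_mul]
      have := evec_nonneg j k
      nlinarith [hkey]
    rw [← happ']
    exact hstep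

end FlatAuxG
section FlatAuxH
variable {V A : Type*} [Fintype V] [DecidableEq V] [Fintype A]
variable (t h : A → V)

/-- every root is a word applied to a generator -/
lemma root_word {γ : V → ℤ} (hγ : IsRoot t h γ) :
    ∃ (w : List V) (x : V → ℤ), good t h w ∧ app t h w x = γ ∧
      ((∃ i, loopfree t h i ∧ x = evec i) ∨ fundRegion t h x ∨
        ∃ y, fundRegion t h y ∧ x = -y) := by
  induction hγ with
  | real i hi => exact ⟨[], evec i, good_nil t h, rfl, Or.inl ⟨i, hi, rfl⟩⟩
  | fund α hα => exact ⟨[], α, good_nil t h, rfl, Or.inr (Or.inl hα)⟩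
  | fundNeg α hα => exact ⟨[], -α, good_nil t h, rfl, Or.inr (Or.inr ⟨α, hα, rfl⟩)⟩
  | reflect α i hi hα ih =>
    obtain ⟨w, x, hw, happ, hx⟩ := ih
    exact ⟨i :: w, x, good_cons t h hi hw, by rw [app_cons, happ], hx⟩

/-- sign coherence: every root is nonnegative or nonpositive -/
theorem root_sign {γ : V → ℤ} (hγ : IsRoot t h γ) : posv γ ∨ posv (-γ) := by
  obtain ⟨w, x, hw, happ, hx⟩ := root_word t h hγ
  rcases hx with ⟨i, hi, rfl⟩ | hf | ⟨y, hf, rfl⟩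
  · rw [← happ]
    exact word_coh t h hw hi
  · left
    rw [← happ]
    intro k
    exact le_trans (hf.2.1 k) (fund_mono t h hf.2.1 hf.2.2.2 _ w hw le_rfl k)
  · right
    rw [← happ, app_neg, neg_neg]
    intro k
    exact le_trans (hf.2.1 k) (fund_mono t h hf.2.1 hf.2.2.2 _ w hw le_rfl k)

lemma cartan_neg_right (x y : V → ℤ) : cartan t h x (-y) = -cartan t h x y := by
  rw [cartan_symm, cartan_neg_left, cartan_symm]

/-- every root has norm at most 2 -/
theorem root_norm {γ : V → ℤ} (hγ : IsRoot t h γ) : cartan t h γ γ ≤ 2 := by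
  induction hγ with
  | real i hi => rw [cartan_evec_self t h hi]
  | fund α hα =>
    have : cartan t h α α ≤ 0 := by
      rw [cartan_repr_right]
      exact Finset.sum_nonpos fun k _ =>
        mul_nonpos_of_nonneg_of_nonpos (hα.2.1 k) (hα.2.2.2 k)
    omega
  | fundNeg α hα =>
    have : cartan t h α α ≤ 0 := by
      rw [cartan_repr_right]
      exact Finset.sum_nonpos fun k _ =>
        mul_nonpos_of_nonneg_of_nonpos (hα.2.1 k) (hα.2.2.2 k)
    rw [cartan_neg_left, cartan_neg_right]
    omega
  | reflect α i hi hα ih => rwa [cartan_srefl t h hi]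

/-- roots which are nonzero only at `v` are `±e_v`-like; key positivity lemma -/
lemma pos_srefl {β : V → ℤ} {v : V} (hv : loopfree t h v) (hroot : IsRoot t h β)
    (hpos : ∀ i, 0 ≤ β i) (hm : 1 ≤ cartan t h β (evec v)) (hne : β ≠ evec v) :
    posv (srefl t h v β) := by
  have hroot' : IsRoot t h (srefl t h v β) := IsRoot.reflect β v hv hroot
  rcases root_sign t h hroot' with hp | hn
  · exact hp
  · -- negative case: β is supported at v only
    exfalso
    have hzero : ∀ k, k ≠ v → β k = 0 := by
      intro k hk
      have h1 := hn k
      rw [Pi.neg_apply, srefl_apply_ne t h v β hk] at h1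
      have := hpos k
      omega
    have hβ : β = β v • evec v := by
      funext k
      rcases eq_or_ne k v with rfl | hk
      · simp [evec_self, smul_eq_mul]
      · rw [hzero k hk]
        simp [evec_ne hk, smul_eq_mul]
    obtain ⟨c, hc⟩ : ∃ c : ℤ, β = c • evec v := ⟨β v, hβ⟩
    have hcar : cartan t h β (evec v) = 2 * c := by
      rw [hc, cartan_smul_left, cartan_evec_self t h hv]; ring
    have hv1 : 1 ≤ c := by omega
    have hnorm := root_norm t h hroot
    rw [hc, cartan_smul_left, cartan_smul_right, cartan_evec_self t h hv] at hnorm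
    have hc1 : c = 1 := by nlinarith
    exact hne (by rw [hc, hc1, one_smul])

end FlatAuxH
section FlatAuxI
variable {V A : Type*} [Fintype V] [DecidableEq V] [Fintype A]
variable (t h : A → V)

lemma qpow_sub (q : V → ℂˣ) (x y : V → ℤ) :
    qpow q (x - y) = qpow q x / qpow q y := by
  simp only [qpow, Pi.sub_apply, zpow_sub, div_eq_mul_inv]
  rw [Finset.prod_mul_distrib, Finset.prod_inv_distrib]

lemma qpow_evec (q : V → ℂˣ) (v : V) : qpow q (evec v) = q v := by
  rw [qpow, Finset.prod_eq_single v (fun b _ hb => by rw [evec_ne hb, zpow_zero])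
    (fun hb => absurd (Finset.mem_univ v) hb)]
  rw [evec_self, zpow_one]

lemma qpow_smul_evec (q : V → ℂˣ) (v : V) (m : ℤ) :
    qpow q (m • evec v) = q v ^ m := by
  rw [qpow, Finset.prod_eq_single v (fun b _ hb => by
      simp only [Pi.smul_apply, smul_eq_mul, evec_ne hb, mul_zero, zpow_zero])
    (fun hb => absurd (Finset.mem_univ v) hb)]
  simp [evec_self]

lemma theta_sub (θ : V → ℤ) (x y : V → ℤ) :
    (∑ i, θ i * (x - y) i) = (∑ i, θ i * x i) - ∑ i, θ i * y i := by
  simp only [Pi.sub_apply, mul_sub]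
  rw [Finset.sum_sub_distrib]

lemma theta_smul_evec (θ : V → ℤ) (v : V) (m : ℤ) :
    (∑ i, θ i * (m • evec v) i) = m * θ v := by
  rw [Finset.sum_eq_single v (fun b _ hb => by
      simp only [Pi.smul_apply, smul_eq_mul, evec_ne hb, mul_zero])
    (fun hb => absurd (Finset.mem_univ v) hb)]
  simp [evec_self]; ring

lemma theta_evec (θ : V → ℤ) (v : V) : (∑ i, θ i * evec v i) = θ v := by
  rw [Finset.sum_eq_single v (fun b _ hb => by rw [evec_ne hb, mul_zero])
    (fun hb => absurd (Finset.mem_univ v) hb), evec_self, mul_one]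

lemma euler_self_srefl {v : V} (hv : loopfree t h v) (x : V → ℤ) :
    euler t h (srefl t h v x) (srefl t h v x) = euler t h x x := by
  have h1 := cartan_srefl t h hv x x
  rw [cartan_self_eq, cartan_self_eq] at h1
  omega

lemma pfun_srefl {v : V} (hv : loopfree t h v) (x : V → ℤ) :
    pfun t h (srefl t h v x) = pfun t h x := by
  simp [pfun, euler_self_srefl t h hv]

lemma pfun_evec {v : V} (hv : loopfree t h v) : pfun t h (evec v) = 0 := by
  simp [pfun, euler_evec_self t h hv]

lemma pfun_sub_evec {v : V} (hv : loopfree t h v) {α : V → ℤ}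
    (h1 : cartan t h α (evec v) = 1) :
    pfun t h (α - evec v) = pfun t h α := by
  have hc : cartan t h (α - evec v) (α - evec v) = cartan t h α α := by
    rw [cartan_sub_left, cartan_sub_right, cartan_sub_right,
      cartan_evec_self t h hv, cartan_symm t h (evec v) α, h1]
    ring
  rw [cartan_self_eq, cartan_self_eq] at hc
  simp only [pfun]
  omega

lemma exists_one_le_of_sum : ∀ {l : List ℤ}, 1 ≤ l.sum → ∃ x ∈ l, 1 ≤ x := by
  intro l
  induction l with
  | nil => intro h1; simp at h1
  | cons a l ih =>
    intro h1
    rcases le_or_gt 1 a with ha | ha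
    · exact ⟨a, List.mem_cons_self, ha⟩
    · rw [List.sum_cons] at h1
      have : 1 ≤ l.sum := by omega
      obtain ⟨x, hx, h1x⟩ := ih this
      exact ⟨x, List.mem_cons_of_mem a hx, h1x⟩

lemma Rplus_evec {q : V → ℂˣ} {θ : V → ℤ} {v : V} (hv : loopfree t h v)
    (hq : q v = 1) (hθ : θ v = 0) : Rplus t h q θ (evec v) := by
  refine ⟨IsRoot.real v hv, fun i => evec_nonneg v i, ?_, ?_⟩
  · rw [qpow_evec, hq]
  · rw [theta_evec, hθ]

lemma Rplus_srefl {q : V → ℂˣ} {θ : V → ℤ} {v : V} {β : V → ℤ} (hv : loopfree t h v)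
    (hq : q v = 1) (hθ : θ v = 0) (hβ : Rplus t h q θ β) (hm : 1 ≤ cartan t h β (evec v))
    (hne : β ≠ evec v) : Rplus t h q θ (srefl t h v β) := by
  obtain ⟨hroot, hpos, hqβ, hθβ⟩ := hβ
  have hposs := pos_srefl t h hv hroot hpos hm hne
  refine ⟨IsRoot.reflect β v hv hroot, hposs, ?_, ?_⟩
  · rw [srefl_eq, qpow_sub, hqβ, qpow_smul_evec, hq, one_zpow]
    norm_num
  · rw [srefl_eq, theta_sub, hθβ, theta_smul_evec, hθ]
    ring

end FlatAuxI


/-- flatness is preserved under `(-1)`-reflections: if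
`(α, e_v) = 1` at a loopfree vertex `v` (with `q_v = 1`, `θ_v = 0`, so the
reflected data coincide with the original) and `α - e_v` is flat, then every
decomposition of `α` into positive roots in `R^+_{q,θ}` has total `p`-value
at most `p(α)`, i.e. `α` is flat. -/
theorem flat_of_minus_one_reflection (t h : A → V) (q : V → ℂˣ) (θ : V → ℤ)
    (α : V → ℤ) (v : V) (hv : loopfree t h v) (hα : ∀ i, 0 ≤ α i)
    (hpair : cartan t h α (evec v) = 1) (hq : q v = 1) (hθ : θ v = 0)
    (hflat : Flat t h q θ (fun i => α i - evec v i)) :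
    Flat t h q θ α := by
  classical
  have hαe : (fun i => α i - evec v i) = α - evec v := funext fun i => rfl
  rw [hαe] at hflat
  have hpeq : pfun t h (α - evec v) = pfun t h α := pfun_sub_evec t h hv hpair
  intro L hL hsum
  -- find a summand pairing positively with e_v
  have hsum1 : (L.map (fun x => cartan t h x (evec v))).sum = 1 := by
    rw [← cartan_list_sum, hsum, hpair]
  obtain ⟨mval, hmem, hm1⟩ := exists_one_le_of_sum (le_of_eq hsum1.symm)
  obtain ⟨β, hβL, rfl⟩ := List.mem_map.mp hmem
  set m := cartan t h β (evec v) with hmdef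
  have hperm : L.Perm (β :: L.erase β) := List.perm_cons_erase hβL
  have hsplit : L.sum = β + (L.erase β).sum := by
    rw [hperm.sum_eq, List.sum_cons]
  have herase_sum : (L.erase β).sum = α - β :=
    eq_sub_of_add_eq' (by rw [← hsplit, hsum])
  have hmapsum : (L.map (pfun t h)).sum
      = pfun t h β + ((L.erase β).map (pfun t h)).sum := by
    rw [(hperm.map (pfun t h)).sum_eq, List.map_cons, List.sum_cons]
  by_cases hc : β = evec v
  · -- drop a copy of e_v
    have h1 : (L.erase β).sum = α - evec v := by rw [herase_sum, hc]
    have h2 := hflat (L.erase β) (fun x hx => hL x (List.mem_of_mem_erase hx)) h1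
    have h3 : pfun t h β = 0 := by rw [hc]; exact pfun_evec t h hv
    rw [hmapsum, h3, zero_add]
    linarith [hpeq]
  · -- replace β by s_v β together with (m-1) copies of e_v
    have hRβ := hL β hβL
    set n := (m - 1).toNat with hndef
    have hncast : (n : ℤ) = m - 1 := Int.toNat_of_nonneg (by omega)
    set L' := srefl t h v β :: (List.replicate n (evec v) ++ L.erase β) with hL'def
    have hmem' : ∀ x ∈ L', Rplus t h q θ x := by
      intro x hx
      rcases List.mem_cons.mp hx with rfl | hx
      · exact Rplus_srefl t h hv hq hθ hRβ hm1 hc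
      · rcases List.mem_append.mp hx with hx | hx
        · rw [List.eq_of_mem_replicate hx]
          exact Rplus_evec t h hv hq hθ
        · exact hL x (List.mem_of_mem_erase hx)
    have hsum' : L'.sum = α - evec v := by
      rw [hL'def, List.sum_cons, List.sum_append, List.sum_replicate, herase_sum]
      funext i
      simp only [Pi.add_apply, Pi.sub_apply, Pi.smul_apply, srefl, smul_eq_mul,
        nsmul_eq_mul, Pi.mul_apply, Pi.natCast_apply, ← hmdef, hncast]
      ring
    have hmap' : (L'.map (pfun t h)).sum = (L.map (pfun t h)).sum := by
      rw [hL'def, List.map_cons, List.sum_cons, List.map_append, List.sum_append,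
        List.map_replicate, List.sum_replicate, pfun_evec t h hv, smul_zero,
        pfun_srefl t h hv, hmapsum]
      ring
    have hfin := hflat L' hmem' hsum'
    rw [hmap'] at hfin
    linarith [hpeq]
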